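/- Let p ≥ 4 be an even integer. Then for all real numbers a and b, p (a^{p−1} − b^{p−1})(a − b) − 2 (a^{p/2} − b^{p/2})² ≥ ((p−2)/2) (a − b)² a^{p−2}. -/
import Mathlib

/-- Key strengthened inequality: for `m = k + 2`,
`2m(a^{2m-1}-b^{2m-1})(a-b) - 2(a^m-b^m)^2 ≥ (m-1)(a-b)^2 (a^{2m-2} + b^{2m-2})`. -/
lemma fp_keyP : ∀ (k : ℕ) (a b : ℝ),
    0 ≤ 2*((k:ℝ)+2)*(a^(2*k+3) - b^(2*k+3))*(a-b) - 2*(a^(k+2)-b^(k+2))^2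
      - ((k:ℝ)+1)*(a-b)^2*(a^(2*k+2)+b^(2*k+2)) := by
  intro k
  induction k using Nat.strong_induction_on with
  | _ k ih =>
    match k with
    | 0 =>
      intro a b
      have heq : 2*(((0:ℕ):ℝ)+2)*(a^(2*0+3) - b^(2*0+3))*(a-b) - 2*(a^(0+2)-b^(0+2))^2
          - (((0:ℕ):ℝ)+1)*(a-b)^2*(a^(2*0+2)+b^(2*0+2))
          = ((a-b)*a)^2 + ((a-b)*b)^2 := by push_cast; ring
      rw [heq]; positivity
    | 1 =>
      intro a b
      have heq : 2*(((1:ℕ):ℝ)+2)*(a^(2*1+3) - b^(2*1+3))*(a-b) - 2*(a^(1+2)-b^(1+2))^2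
          - (((1:ℕ):ℝ)+1)*(a-b)^2*(a^(2*1+2)+b^(2*1+2))
          = ((a-b)*(a+b))^2 * ((2*a-b)^2 + 3*b^2) / 2 := by push_cast; ring
      rw [heq]; positivity
    | (n+2) =>
      intro a b
      have IH := ih n (by omega) a b
      have hmono : (0:ℝ) ≤ (a^2 - b^2) * (a^(2*n+4) - b^(2*n+4)) := by
        have hrw : ∀ x : ℝ, x^(2*n+4) = (x^2)^(n+2) := by
          intro x; rw [show 2*n+4 = 2*(n+2) by ring, pow_mul]
        rcases le_total (a^2) (b^2) with h | h
        · have h2 : a^(2*n+4) ≤ b^(2*n+4) := by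
            rw [hrw a, hrw b]; exact pow_le_pow_left₀ (sq_nonneg a) h _
          nlinarith [mul_nonneg (sub_nonneg.2 h) (sub_nonneg.2 h2)]
        · have h2 : b^(2*n+4) ≤ a^(2*n+4) := by
            rw [hrw a, hrw b]; exact pow_le_pow_left₀ (sq_nonneg b) h _
          nlinarith [mul_nonneg (sub_nonneg.2 h) (sub_nonneg.2 h2)]
      have hR : (0:ℝ) ≤ ((n:ℝ)+2)*(a+b)^2*(a^(2*n+4)+b^(2*n+4))
          + (a^2-b^2)*(a^(2*n+4)-b^(2*n+4)) := by
        have hrw : ∀ x : ℝ, x^(2*n+4) = (x^(n+2))^2 := by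
          intro x; rw [show 2*n+4 = (n+2)*2 by ring, pow_mul]
        have h1 : (0:ℝ) ≤ a^(2*n+4) + b^(2*n+4) := by
          rw [hrw a, hrw b]; positivity
        have h2 : (0:ℝ) ≤ ((n:ℝ)+2)*(a+b)^2 := by positivity
        exact add_nonneg (mul_nonneg h2 h1) hmono
      have hid : 2*(((n+2:ℕ)):ℝ)*0 + (2*((((n+2:ℕ)):ℝ)+2)*(a^(2*(n+2)+3) - b^(2*(n+2)+3))*(a-b)
            - 2*(a^((n+2)+2)-b^((n+2)+2))^2
            - ((((n+2:ℕ)):ℝ)+1)*(a-b)^2*(a^(2*(n+2)+2)+b^(2*(n+2)+2)))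
          = (a*b)^2 * (2*((n:ℝ)+2)*(a^(2*n+3) - b^(2*n+3))*(a-b) - 2*(a^(n+2)-b^(n+2))^2
              - ((n:ℝ)+1)*(a-b)^2*(a^(2*n+2)+b^(2*n+2)))
            + (a-b)^2 * (((n:ℝ)+2)*(a+b)^2*(a^(2*n+4)+b^(2*n+4))
              + (a^2-b^2)*(a^(2*n+4)-b^(2*n+4))) := by
        push_cast; ring
      have hfinal := add_nonneg (mul_nonneg (sq_nonneg (a*b)) IH)
        (mul_nonneg (sq_nonneg (a-b)) hR)
      rw [← hid] at hfinal
      linarith [hfinal]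

/-- For every even integer `p ≥ 4` and all real `a, b`,
`p (a^{p-1} - b^{p-1})(a - b) - 2 (a^{p/2} - b^{p/2})² ≥ ((p-2)/2) (a-b)² a^{p-2}`. -/
theorem fp_lower_bound (p : ℕ) (hp : 4 ≤ p) (hpeven : Even p) (a b : ℝ) :
    (p : ℝ) * (a ^ (p - 1) - b ^ (p - 1)) * (a - b) - 2 * (a ^ (p / 2) - b ^ (p / 2)) ^ 2 ≥
      (((p : ℝ) - 2) / 2) * (a - b) ^ 2 * a ^ (p - 2) := by
  obtain ⟨r, hr⟩ := hpeven
  have hex : ∃ k : ℕ, p = 2*k+4 := ⟨p/2 - 2, by omega⟩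
  obtain ⟨k, rfl⟩ := hex
  rw [show 2*k+4-1 = 2*k+3 from by omega, show (2*k+4)/2 = k+2 from by omega,
    show 2*k+4-2 = 2*k+2 from by omega]
  have hkey := fp_keyP k a b
  have hb : (0:ℝ) ≤ ((k:ℝ)+1) * (a-b)^2 * (b^(k+1))^2 := by positivity
  rw [ge_iff_le, ← sub_nonneg]
  have heq : ((2*k+4:ℕ):ℝ) * (a ^ (2*k+3) - b ^ (2*k+3)) * (a - b)
        - 2 * (a ^ (k+2) - b ^ (k+2)) ^ 2
        - (((2*k+4:ℕ):ℝ) - 2) / 2 * (a - b) ^ 2 * a ^ (2*k+2)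
      = (2*((k:ℝ)+2)*(a^(2*k+3) - b^(2*k+3))*(a-b) - 2*(a^(k+2)-b^(k+2))^2
          - ((k:ℝ)+1)*(a-b)^2*(a^(2*k+2)+b^(2*k+2)))
        + ((k:ℝ)+1) * (a-b)^2 * (b^(k+1))^2 := by
    push_cast; ring
  rw [heq]
  exact add_nonneg hkey hb
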